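/- Let U = T_D (D ≥ 1) with the Pommaret relative involutive division M_P(u) = { i | i ≤ min(u) }, and let G_U be the Ufnarovsky-like graph on U: there is an edge t → s if and only if there exists an index j ∉ M_P(s) with s + e_j ∈ C(t). Let N ⊆ U and set H = (⋃_{l ∈ N} C(l)) ∪ { v | deg(v) < D }. Then H is an order ideal (downward closed under divisibility) if and only if N is Ufnarovsky-revenant, i.e. for all t, s ∈ U with an edge t → s in G_U and t ∈ N, also s ∈ N. -/

import Mathlib

/-- The degree of an exponent vector: the sum of the exponents. -/
def deg {n : ℕ} (u : Fin n → ℕ) : ℕ := ∑ i, u i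

/-- The support of an exponent vector: the indices with nonzero exponent. -/
def supp {n : ℕ} (u : Fin n → ℕ) : Set (Fin n) := {i | u i ≠ 0}

/-- Given an assignment `M` of multiplicative variables, the cone of `u` is the set
of all `u + v` where the support of `v` is contained in `M u`. -/
def cone {n : ℕ} (M : (Fin n → ℕ) → Set (Fin n)) (u : Fin n → ℕ) :
    Set (Fin n → ℕ) :=
  {w | ∃ v : Fin n → ℕ, supp v ⊆ M u ∧ w = u + v}

namespace PommaretAux

open Finset

variable {n : ℕ}

def tsum (w : Fin n → ℕ) (m : Fin n) : ℕ := ∑ i ∈ univ.filter (fun i => m ≤ i), w i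
def ssum (w : Fin n → ℕ) (m : Fin n) : ℕ := ∑ i ∈ univ.filter (fun i => m < i), w i

lemma tsum_eq (w : Fin n → ℕ) (m : Fin n) : tsum w m = w m + ssum w m := by
  unfold tsum ssum
  have h : univ.filter (fun i => m ≤ i) = insert m (univ.filter (fun i => m < i)) := by
    ext i
    simp only [mem_filter, mem_univ, true_and, mem_insert]
    constructor
    · intro h; rcases eq_or_lt_of_le h with h | h
      · exact Or.inl h.symm
      · exact Or.inr h
    · rintro (rfl | h); · exact le_refl _
      · exact le_of_lt h
  rw [h, sum_insert (by simp)]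

lemma deg_add (w v : Fin n → ℕ) : deg (w + v) = deg w + deg v := by
  simp [deg, Finset.sum_add_distrib]

lemma deg_single (i : Fin n) : deg (Pi.single i 1) = 1 := by
  simp [deg, Finset.sum_pi_single']

lemma tsum_add (w v : Fin n → ℕ) (m : Fin n) : tsum (w + v) m = tsum w m + tsum v m := by
  simp [tsum, Finset.sum_add_distrib]

lemma ssum_add (w v : Fin n → ℕ) (m : Fin n) : ssum (w + v) m = ssum w m + ssum v m := by
  simp [ssum, Finset.sum_add_distrib]

lemma tsum_single (i m : Fin n) : tsum (Pi.single i 1) m = if m ≤ i then 1 else 0 := by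
  simp [tsum, Finset.sum_pi_single']

lemma ssum_single (i m : Fin n) : ssum (Pi.single i 1) m = if m < i then 1 else 0 := by
  simp [ssum, Finset.sum_pi_single']

lemma tsum_le_tsum {w v : Fin n → ℕ} (h : ∀ i, v i ≤ w i) (m : Fin n) :
    tsum v m ≤ tsum w m :=
  Finset.sum_le_sum fun i _ => h i

lemma deg_le_deg {w v : Fin n → ℕ} (h : ∀ i, v i ≤ w i) : deg v ≤ deg w :=
  Finset.sum_le_sum fun i _ => h i

def clsSet (D : ℕ) (w : Fin n → ℕ) : Finset (Fin n) := univ.filter (fun m => D ≤ tsum w m)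

lemma clsSet_nonempty (hn : 0 < n) {D : ℕ} {w : Fin n → ℕ} (hw : D ≤ deg w) :
    (clsSet D w).Nonempty := by
  refine ⟨⟨0, hn⟩, ?_⟩
  simp only [clsSet, mem_filter, mem_univ, true_and]
  have h : univ.filter (fun i => (⟨0, hn⟩ : Fin n) ≤ i) = univ := by
    apply Finset.filter_true_of_mem
    intro i _
    exact Fin.mk_le_of_le_val (Nat.zero_le _)
  rw [tsum, h]
  exact hw

noncomputable def cls (D : ℕ) (w : Fin n → ℕ) (h : (clsSet D w).Nonempty) : Fin n :=
  (clsSet D w).max' h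

lemma cls_spec (D : ℕ) (w : Fin n → ℕ) (h : (clsSet D w).Nonempty) :
    D ≤ tsum w (cls D w h) := by
  have := Finset.max'_mem (clsSet D w) h
  exact (Finset.mem_filter.mp this).2

lemma le_cls (D : ℕ) (w : Fin n → ℕ) (h : (clsSet D w).Nonempty) {m : Fin n}
    (hm : D ≤ tsum w m) : m ≤ cls D w h :=
  Finset.le_max' _ _ (by simpa [clsSet] using hm)

lemma ssum_cls_lt (D : ℕ) (hD : 1 ≤ D) (w : Fin n → ℕ) (h : (clsSet D w).Nonempty) :
    ssum w (cls D w h) < D := by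
  by_contra hcon
  push_neg at hcon
  set k := cls D w h with hk
  have hS : (univ.filter (fun i => k < i)).Nonempty := by
    rcases Finset.eq_empty_or_nonempty (univ.filter (fun i => k < i)) with he | hne
    · exfalso
      have : ssum w k = 0 := by rw [ssum, he]; simp
      omega
    · exact hne
  set m0 := (univ.filter (fun i => k < i)).min' hS with hm0
  have hm0mem := Finset.min'_mem _ hS
  have hkm0 : k < m0 := by
    have := hm0mem
    simp only [← hm0, mem_filter, mem_univ, true_and] at this
    exact this
  have hfe : univ.filter (fun i => m0 ≤ i) = univ.filter (fun i => k < i) := by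
    ext i
    simp only [mem_filter, mem_univ, true_and]
    constructor
    · intro h'; exact lt_of_lt_of_le hkm0 h'
    · intro h'; exact Finset.min'_le _ _ (by simp [h'])
  have htm0 : tsum w m0 = ssum w k := by rw [tsum, hfe]; rfl
  have : m0 ≤ k := le_cls D w h (by rw [htm0]; exact hcon)
  exact absurd this (not_le.mpr hkm0)

noncomputable def anc (D : ℕ) (w : Fin n → ℕ) (h : (clsSet D w).Nonempty) : Fin n → ℕ :=
  fun m => (if m = cls D w h then D - ssum w (cls D w h) else 0) +
    (if cls D w h < m then w m else 0)

lemma anc_of_lt (D : ℕ) (w : Fin n → ℕ) (h : (clsSet D w).Nonempty) {m : Fin n}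
    (hm : m < cls D w h) : anc D w h m = 0 := by
  simp [anc, hm.ne, not_lt.mpr hm.le]

lemma anc_of_eq (D : ℕ) (w : Fin n → ℕ) (h : (clsSet D w).Nonempty) :
    anc D w h (cls D w h) = D - ssum w (cls D w h) := by
  simp [anc]

lemma anc_of_gt (D : ℕ) (w : Fin n → ℕ) (h : (clsSet D w).Nonempty) {m : Fin n}
    (hm : cls D w h < m) : anc D w h m = w m := by
  simp [anc, hm, hm.ne']

lemma anc_congr (D : ℕ) {w₁ w₂ : Fin n → ℕ} (e : w₁ = w₂) (h₁ : (clsSet D w₁).Nonempty)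
    (h₂ : (clsSet D w₂).Nonempty) : anc D w₁ h₁ = anc D w₂ h₂ := by
  subst e; rfl

lemma deg_anc (D : ℕ) (hD : 1 ≤ D) (w : Fin n → ℕ) (h : (clsSet D w).Nonempty) :
    deg (anc D w h) = D := by
  have hlt := ssum_cls_lt D hD w h
  unfold deg anc
  rw [Finset.sum_add_distrib]
  have h1 : ∑ m, (if m = cls D w h then D - ssum w (cls D w h) else 0)
      = D - ssum w (cls D w h) := by
    rw [Finset.sum_ite_eq' univ (cls D w h) (fun _ => D - ssum w (cls D w h))]
    simp
  have h2 : ∑ m, (if cls D w h < m then w m else 0) = ssum w (cls D w h) := by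
    rw [← Finset.sum_filter]; rfl
  rw [h1, h2]
  omega

lemma anc_le (D : ℕ) (w : Fin n → ℕ) (h : (clsSet D w).Nonempty) (m : Fin n) :
    anc D w h m ≤ w m := by
  rcases lt_trichotomy m (cls D w h) with hm | hm | hm
  · rw [anc_of_lt D w h hm]; exact Nat.zero_le _
  · subst hm
    rw [anc_of_eq]
    have := cls_spec D w h
    rw [tsum_eq] at this
    omega
  · rw [anc_of_gt D w h hm]

lemma anc_cls_ne_zero (D : ℕ) (hD : 1 ≤ D) (w : Fin n → ℕ) (h : (clsSet D w).Nonempty) :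
    anc D w h (cls D w h) ≠ 0 := by
  rw [anc_of_eq]
  have := ssum_cls_lt D hD w h
  omega



lemma M_anc (D : ℕ) (M : (Fin n → ℕ) → Set (Fin n))
    (hM : ∀ u : Fin n → ℕ, deg u = D →
      ∀ j : Fin n, (u j ≠ 0 ∧ ∀ i < j, u i = 0) → M u = {i : Fin n | i ≤ j})
    (hD : 1 ≤ D) (w : Fin n → ℕ) (h : (clsSet D w).Nonempty) :
    M (anc D w h) = {i : Fin n | i ≤ cls D w h} :=
  hM _ (deg_anc D hD w h) _
    ⟨anc_cls_ne_zero D hD w h, fun _ hi => anc_of_lt D w h hi⟩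

lemma mem_cone_anc (D : ℕ) (M : (Fin n → ℕ) → Set (Fin n))
    (hM : ∀ u : Fin n → ℕ, deg u = D →
      ∀ j : Fin n, (u j ≠ 0 ∧ ∀ i < j, u i = 0) → M u = {i : Fin n | i ≤ j})
    (hD : 1 ≤ D) (w : Fin n → ℕ) (h : (clsSet D w).Nonempty) :
    w ∈ cone M (anc D w h) := by
  refine ⟨fun m => w m - anc D w h m, ?_, ?_⟩
  · rw [M_anc D M hM hD w h]
    intro i hi
    simp only [supp, Set.mem_setOf_eq] at hi ⊢
    by_contra hik
    push_neg at hik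
    rw [anc_of_gt D w h hik] at hi
    omega
  · funext m
    have := anc_le D w h m
    simp only [Pi.add_apply]
    omega

lemma cls_eq_min (D : ℕ) (hD : 1 ≤ D) (l v : Fin n → ℕ) (hl : deg l = D) (j : Fin n)
    (hj : l j ≠ 0) (hjmin : ∀ i, i < j → l i = 0) (hv : ∀ i, v i ≠ 0 → i ≤ j)
    (h : (clsSet D (l + v)).Nonempty) : cls D (l + v) h = j := by
  have hlj : tsum l j = D := by
    rw [← hl, deg, ← Finset.sum_filter_add_sum_filter_not univ (fun i => j ≤ i) l]
    have : ∑ i ∈ univ.filter (fun i => ¬ j ≤ i), l i = 0 := by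
      apply Finset.sum_eq_zero
      intro i hi
      simp only [mem_filter, mem_univ, true_and, not_le] at hi
      exact hjmin i hi
    rw [tsum, this, add_zero]
  have h1 : D ≤ tsum (l + v) j := by
    rw [tsum_add, hlj]; exact Nat.le_add_right _ _
  have h2 : ∀ m, j < m → tsum (l + v) m < D := by
    intro m hm
    have hvz : tsum v m = 0 := by
      apply Finset.sum_eq_zero
      intro i hi
      simp only [mem_filter, mem_univ, true_and] at hi
      by_contra hne
      exact absurd (hv i hne) (not_le.mpr (lt_of_lt_of_le hm hi))
    have hlm : tsum l m + l j ≤ D := by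
      rw [← hl, deg]
      have hsub : insert j (univ.filter (fun i => m ≤ i)) ⊆ univ := by
        intro x _; exact mem_univ x
      have hjn : j ∉ univ.filter (fun i => m ≤ i) := by
        simp [not_le.mpr hm]
      calc tsum l m + l j = ∑ i ∈ insert j (univ.filter (fun i => m ≤ i)), l i := by
            rw [Finset.sum_insert hjn, tsum]; ring
        _ ≤ ∑ i, l i := Finset.sum_le_sum_of_subset hsub
    have : 1 ≤ l j := Nat.pos_of_ne_zero hj
    rw [tsum_add, hvz]
    omega
  apply le_antisymm
  · by_contra hcon
    push_neg at hcon
    exact absurd (cls_spec D (l + v) h) (not_le.mpr (h2 _ hcon))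
  · exact le_cls D (l + v) h h1

lemma anc_eq_of_cone (D : ℕ) (hD : 1 ≤ D) (l v : Fin n → ℕ) (hl : deg l = D) (j : Fin n)
    (hj : l j ≠ 0) (hjmin : ∀ i, i < j → l i = 0) (hv : ∀ i, v i ≠ 0 → i ≤ j)
    (h : (clsSet D (l + v)).Nonempty) : anc D (l + v) h = l := by
  have hc := cls_eq_min D hD l v hl j hj hjmin hv h
  have hlj : tsum l j = D := by
    rw [← hl, deg, ← Finset.sum_filter_add_sum_filter_not univ (fun i => j ≤ i) l]
    have : ∑ i ∈ univ.filter (fun i => ¬ j ≤ i), l i = 0 := by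
      apply Finset.sum_eq_zero
      intro i hi
      simp only [mem_filter, mem_univ, true_and, not_le] at hi
      exact hjmin i hi
    rw [tsum, this, add_zero]
  funext m
  rcases lt_trichotomy m j with hm | hm | hm
  · rw [anc_of_lt D (l + v) h (by rw [hc]; exact hm), hjmin m hm]
  · subst hm
    rw [← hc, anc_of_eq, hc]
    have hsv : ssum v m = 0 := by
      apply Finset.sum_eq_zero
      intro i hi
      simp only [mem_filter, mem_univ, true_and] at hi
      by_contra hne
      exact absurd (hv i hne) (not_le.mpr hi)
    have hsl : l m + ssum l m = D := by rw [← tsum_eq, hlj]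
    rw [ssum_add, hsv, add_zero]
    omega
  · rw [anc_of_gt D (l + v) h (by rw [hc]; exact hm)]
    have : v m = 0 := by
      by_contra hne
      exact absurd (hv m hne) (not_le.mpr hm)
    simp [this]

lemma exists_min (l : Fin n → ℕ) (hl : deg l ≠ 0) :
    ∃ j : Fin n, l j ≠ 0 ∧ ∀ i, i < j → l i = 0 := by
  have hS : (univ.filter (fun i => l i ≠ 0)).Nonempty := by
    by_contra hcon
    rw [Finset.not_nonempty_iff_eq_empty, Finset.filter_eq_empty_iff] at hcon
    apply hl
    apply Finset.sum_eq_zero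
    intro i hi
    have := hcon hi
    simpa using this
  refine ⟨(univ.filter (fun i => l i ≠ 0)).min' hS, ?_, ?_⟩
  · have := Finset.min'_mem _ hS
    simpa using this
  · intro i hi
    by_contra hne
    have : (univ.filter (fun i => l i ≠ 0)).min' hS ≤ i :=
      Finset.min'_le _ _ (by simp [hne])
    exact absurd this (not_le.mpr hi)



lemma step (D : ℕ) (hD : 1 ≤ D) (M : (Fin n → ℕ) → Set (Fin n))
    (hM : ∀ u : Fin n → ℕ, deg u = D →
      ∀ j : Fin n, (u j ≠ 0 ∧ ∀ i < j, u i = 0) → M u = {i : Fin n | i ≤ j})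
    (N : Set (Fin n → ℕ))
    (R : ∀ t s : Fin n → ℕ, deg t = D → deg s = D →
        (∃ j : Fin n, j ∉ M s ∧ s + Pi.single j 1 ∈ cone M t) → t ∈ N → s ∈ N)
    (v : Fin n → ℕ) (i : Fin n)
    (hw : (clsSet D (v + Pi.single i 1)).Nonempty) (hv : (clsSet D v).Nonempty)
    (hanc : anc D (v + Pi.single i 1) hw ∈ N) : anc D v hv ∈ N := by
  set w := v + Pi.single i 1 with hwdef
  set k := cls D w hw with hkdef
  set k' := cls D v hv with hk'def
  have hvw : ∀ m, v m ≤ w m := fun m => by simp [hwdef]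
  have hk'k : k' ≤ k :=
    le_cls D w hw (le_trans (cls_spec D v hv) (tsum_le_tsum hvw k'))
  by_cases hik : i ≤ k'
  · -- anc v = anc w
    have hkk' : k = k' := by
      apply le_antisymm _ hk'k
      by_cases hki : k ≤ i
      · exact le_trans hki hik
      · apply le_cls D v hv
        have h1 : D ≤ tsum v k + tsum (Pi.single i 1) k := by
          rw [← tsum_add]; exact cls_spec D w hw
        rw [tsum_single, if_neg hki] at h1
        simpa using h1
    have heq : anc D v hv = anc D w hw := by
      funext m
      rcases lt_trichotomy m k' with hm | hm | hm
      · rw [anc_of_lt D v hv hm, anc_of_lt D w hw (by rw [← hkdef, hkk']; exact hm)]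
      · subst hm
        rw [anc_of_eq D v hv]
        have h2 : anc D w hw k = D - ssum w k := anc_of_eq D w hw
        rw [hkk'] at h2
        rw [h2, ← hkk']
        have hsw : ssum w k = ssum v k := by
          rw [hwdef, ssum_add, ssum_single, if_neg (not_lt.mpr (by rw [hkk']; exact hik))]
          omega
        rw [hsw, hkk']
      · rw [anc_of_gt D v hv hm, anc_of_gt D w hw (by rw [← hkdef, hkk']; exact hm)]
        have hmi : m ≠ i := fun he => absurd (he ▸ hm) (not_lt.mpr hik)
        simp [hwdef, Pi.single_eq_of_ne hmi]
    rw [heq]; exact hanc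
  · push_neg at hik
    refine R (anc D w hw) (anc D v hv) (deg_anc D hD w hw) (deg_anc D hD v hv)
      ⟨i, ?_, ?_⟩ hanc
    · rw [M_anc D M hM hD v hv]
      simp only [Set.mem_setOf_eq]
      exact not_le.mpr hik
    · -- s + e_i ∈ cone M t
      have hgt : ∀ m, k < m → anc D v hv m + (Pi.single i 1 : Fin n → ℕ) m = anc D w hw m := by
        intro m hm
        rw [anc_of_gt D v hv (lt_of_le_of_lt hk'k hm), anc_of_gt D w hw hm]
        simp [hwdef]
      have hle : ∀ m, anc D w hw m ≤ anc D v hv m + (Pi.single i 1 : Fin n → ℕ) m := by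
        intro m
        rcases lt_trichotomy m k with hm | hm | hm
        · rw [anc_of_lt D w hw hm]; exact Nat.zero_le _
        · subst hm
          have h3 : anc D w hw k = D - ssum w k := anc_of_eq D w hw
          have h1 : D ≤ tsum w k := cls_spec D w hw
          rw [tsum_eq] at h1
          rcases lt_or_eq_of_le hk'k with hkk | hkk
          · rw [anc_of_gt D v hv hkk, h3]
            have h2 : w k = v k + (Pi.single i 1 : Fin n → ℕ) k := by simp [hwdef]
            omega
          · have h4 : anc D v hv k = D - ssum v k := by rw [← hkk]; exact anc_of_eq D v hv
            have hsw : ssum w k = ssum v k + 1 := by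
              rw [hwdef, ssum_add, ssum_single, if_pos (by rw [← hkk]; exact hik)]
            rw [h3, h4]
            omega
        · rw [← hgt m hm]
      refine ⟨fun m => (anc D v hv m + (Pi.single i 1 : Fin n → ℕ) m) - anc D w hw m, ?_, ?_⟩
      · rw [M_anc D M hM hD w hw]
        intro m hm
        simp only [supp, Set.mem_setOf_eq] at hm ⊢
        by_contra hcon
        push_neg at hcon
        rw [← hgt m hcon] at hm
        omega
      · funext m
        have := hle m
        simp only [Pi.add_apply]
        omega

lemma down (hn : 0 < n) (D : ℕ) (hD : 1 ≤ D) (M : (Fin n → ℕ) → Set (Fin n))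
    (hM : ∀ u : Fin n → ℕ, deg u = D →
      ∀ j : Fin n, (u j ≠ 0 ∧ ∀ i < j, u i = 0) → M u = {i : Fin n | i ≤ j})
    (N : Set (Fin n → ℕ))
    (R : ∀ t s : Fin n → ℕ, deg t = D → deg s = D →
        (∃ j : Fin n, j ∉ M s ∧ s + Pi.single j 1 ∈ cone M t) → t ∈ N → s ∈ N) :
    ∀ (c : ℕ) (w v : Fin n → ℕ), (∀ i, v i ≤ w i) → D ≤ deg v → deg w = deg v + c →
      ∀ (hw : (clsSet D w).Nonempty) (hv : (clsSet D v).Nonempty),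
        anc D w hw ∈ N → anc D v hv ∈ N := by
  intro c
  induction c with
  | zero =>
    intro w v hvw hdv hdeg hw hv h
    have hvweq : v = w := by
      funext m
      refine le_antisymm (hvw m) ?_
      by_contra hcon
      push_neg at hcon
      have : deg v < deg w := by
        apply Finset.sum_lt_sum (fun i _ => hvw i) ⟨m, mem_univ m, hcon⟩
      omega
    rw [anc_congr D hvweq hv hw]
    exact h
  | succ c ih =>
    intro w v hvw hdv hdeg hw hv h
    have hex : ∃ i, v i < w i := by
      by_contra hcon
      push_neg at hcon
      have : deg w ≤ deg v := deg_le_deg hcon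
      omega
    obtain ⟨i, hi⟩ := hex
    set w' : Fin n → ℕ := fun m => w m - (Pi.single i 1 : Fin n → ℕ) m with hw'def
    have hww' : w' + Pi.single i 1 = w := by
      funext m
      by_cases hm : m = i
      · subst hm
        simp only [Pi.add_apply, hw'def, Pi.single_eq_same]
        omega
      · simp [hw'def, Pi.single_eq_of_ne hm]
    have hvw' : ∀ m, v m ≤ w' m := by
      intro m
      by_cases hm : m = i
      · subst hm; simp only [hw'def, Pi.single_eq_same]; omega
      · simp only [hw'def, Pi.single_eq_of_ne hm]
        have := hvw m
        omega
    have hdw' : deg w' = deg v + c := by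
      have h1 : deg w = deg w' + 1 := by
        rw [← hww', deg_add, deg_single]
      omega
    have hDw' : D ≤ deg w' := by
      have := deg_le_deg hvw'
      omega
    have hw'ne : (clsSet D w').Nonempty := clsSet_nonempty hn hDw'
    have hw'e : (clsSet D (w' + Pi.single i 1)).Nonempty := by rw [hww']; exact hw
    have h1 : anc D (w' + Pi.single i 1) hw'e ∈ N := by
      rw [anc_congr D hww' hw'e hw]
      exact h
    have h2 : anc D w' hw'ne ∈ N :=
      step D hD M hM N R w' i hw'e hw'ne h1
    exact ih w' v hvw' hdv hdw' hw'ne hv h2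


end PommaretAux

open PommaretAux

/-- Let `M` be the Pommaret division on `U = T_D` (multiplicative variables of
`u` are `{i | i ≤ min(u)}`). In the Ufnarovsky-like graph there is an edge
`t → s` iff some non-multiplicative index `j` of `s` satisfies
`s + e_j ∈ C(t)`. For `N ⊆ U`, the set
`H = (⋃_{l ∈ N} C(l)) ∪ {v | deg v < D}` is an order ideal (downward closed
under divisibility, i.e. pointwise `≤`) iff `N` is Ufnarovsky-revenant:
whenever there is an edge `t → s` with `t ∈ N`, also `s ∈ N`. -/
theorem pommaret_orderIdeal_iff_ufnarovsky_revenant (n D : ℕ) (hn : 1 ≤ n)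
    (hD : 1 ≤ D) (M : (Fin n → ℕ) → Set (Fin n))
    (hM : ∀ u : Fin n → ℕ, deg u = D →
      ∀ j : Fin n, (u j ≠ 0 ∧ ∀ i < j, u i = 0) → M u = {i : Fin n | i ≤ j})
    (N : Set (Fin n → ℕ)) (hN : N ⊆ {u : Fin n → ℕ | deg u = D}) :
    (∀ w ∈ (⋃ l ∈ N, cone M l) ∪ {v : Fin n → ℕ | deg v < D},
        ∀ v : Fin n → ℕ, (∀ i, v i ≤ w i) →
          v ∈ (⋃ l ∈ N, cone M l) ∪ {v : Fin n → ℕ | deg v < D}) ↔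
      (∀ t s : Fin n → ℕ, deg t = D → deg s = D →
        (∃ j : Fin n, j ∉ M s ∧ s + Pi.single j 1 ∈ cone M t) →
        t ∈ N → s ∈ N) := by
  constructor
  · rintro OI t s ht hs ⟨j, hjM, hmem⟩ htN
    have h1 : s + Pi.single j 1 ∈ (⋃ l ∈ N, cone M l) ∪ {v : Fin n → ℕ | deg v < D} :=
      Or.inl (Set.mem_biUnion htN hmem)
    have h2 := OI _ h1 s (fun i => Nat.le_add_right (s i) _)
    rcases h2 with h2 | h2
    · rw [Set.mem_iUnion₂] at h2
      obtain ⟨l, hlN, y, hy, hsy⟩ := h2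
      have hdl : deg l = D := hN hlN
      have hds : deg s = deg l + deg y := by rw [hsy, deg_add]
      have hy0 : deg y = 0 := by omega
      have hsl : s = l := by
        funext m
        rw [hsy]
        simp only [Pi.add_apply]
        have hym : y m = 0 := by
          have := (Finset.sum_eq_zero_iff).mp hy0
          exact this m (Finset.mem_univ m)
        omega
      rw [hsl]; exact hlN
    · simp only [Set.mem_setOf_eq] at h2
      omega
  · intro R w hw v hvw
    by_cases hdv : deg v < D
    · exact Or.inr hdv
    push_neg at hdv
    left
    have hvlew : deg v ≤ deg w := deg_le_deg hvw
    have hdw : D ≤ deg w := le_trans hdv hvlew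
    have hwcone : w ∈ ⋃ l ∈ N, cone M l := by
      rcases hw with h | h
      · exact h
      · exfalso; simp only [Set.mem_setOf_eq] at h; omega
    rw [Set.mem_iUnion₂] at hwcone
    obtain ⟨l, hlN, y, hy, hwy⟩ := hwcone
    have hdl : deg l = D := hN hlN
    obtain ⟨j, hj, hjmin⟩ := exists_min l (by omega)
    have hMl : M l = {i : Fin n | i ≤ j} := hM l hdl j ⟨hj, fun i hi => hjmin i hi⟩
    have hyj : ∀ i, y i ≠ 0 → i ≤ j := by
      intro i hi
      have hmem' : i ∈ M l := hy hi
      rw [hMl] at hmem'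
      exact hmem'
    have hwne : (clsSet D w).Nonempty := clsSet_nonempty hn hdw
    have hvne : (clsSet D v).Nonempty := clsSet_nonempty hn hdv
    have hlyne : (clsSet D (l + y)).Nonempty := by rw [← hwy]; exact hwne
    have hancw : anc D w hwne = l := by
      rw [anc_congr D hwy hwne hlyne]
      exact anc_eq_of_cone D hD l y hdl j hj hjmin hyj hlyne
    have hN1 : anc D w hwne ∈ N := by rw [hancw]; exact hlN
    have hN2 : anc D v hvne ∈ N :=
      down hn D hD M hM N R (deg w - deg v) w v hvw hdv (by omega) hwne hvne hN1
    rw [Set.mem_iUnion₂]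
    exact ⟨anc D v hvne, hN2, mem_cone_anc D M hM hD v hvne⟩
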